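/- Let {f_i}_{i∈I} be a finite family of vectors in a finite-dimensional vector space X, and suppose (1) I can be partitioned into r+1 sets each indexing a linearly independent family, and (2) I can be partitioned into one set and r further sets each indexing a linearly independent spanning set of X. Then there is a partition {I_1, …, I_{r+1}} of I such that {f_j}_{j∈I_i} is a linearly independent spanning set (a basis of X) for i = 2, …, r+1 and {f_j}_{j∈I_1} is linearly independent. -/

import Mathlib

open Set Submodule

namespace Part18

variable {K X I : Type*} [Field K] [AddCommGroup X] [Module K X]

lemma li_mono (f : I → X) {S T : Set I} (h : T ⊆ S)
    (hS : LinearIndependent K (S.restrict f)) : LinearIndependent K (T.restrict f) :=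
  hS.comp (Set.inclusion h) (Set.inclusion_injective h)

lemma li_insert (f : I → X) {S : Set I} {a : I} (ha : a ∉ S)
    (hS : LinearIndependent K (S.restrict f)) (hx : f a ∉ span K (f '' S)) :
    LinearIndependent K ((insert a S).restrict f) :=
  (linearIndepOn_insert ha).2 ⟨hS, hx⟩

lemma restrict_image (f : I → X) {S A : Set I} (hA : A ⊆ S) :
    (S.restrict f) '' (Subtype.val ⁻¹' A) = f '' A := by
  ext y
  constructor
  · rintro ⟨⟨x, hxS⟩, hxA, rfl⟩
    exact ⟨x, hxA, rfl⟩
  · rintro ⟨x, hxA, rfl⟩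
    exact ⟨⟨x, hA hxA⟩, hxA, rfl⟩

lemma span_inter (f : I → X) {S A B : Set I} (hS : LinearIndependent K (S.restrict f))
    (hA : A ⊆ S) (hB : B ⊆ S) {v : X} (hvA : v ∈ span K (f '' A)) (hvB : v ∈ span K (f '' B)) :
    v ∈ span K (f '' (A ∩ B)) := by
  have hsplit : A = (A ∩ B) ∪ (A \ B) := by
    ext z; by_cases hz : z ∈ B <;> simp [hz]
  have h1 : v ∈ span K (f '' (A ∩ B)) ⊔ span K (f '' (A \ B)) := by
    rw [← Submodule.span_union, ← Set.image_union, ← hsplit]; exact hvA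
  obtain ⟨a, haa, b, hbb, hab⟩ := Submodule.mem_sup.1 h1
  have hb2 : b ∈ span K (f '' B) := by
    have : a ∈ span K (f '' B) :=
      span_mono (Set.image_mono (f := f) Set.inter_subset_right) haa
    have hv : b = v - a := by rw [← hab]; abel
    rw [hv]; exact Submodule.sub_mem _ hvB this
  have hdisj : Disjoint (span K (f '' (A \ B))) (span K (f '' B)) := by
    have := hS.disjoint_span_image (s := Subtype.val ⁻¹' (A \ B)) (t := Subtype.val ⁻¹' B)
      (Disjoint.preimage _ (Set.disjoint_sdiff_left (s := B) (t := A)))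
    rwa [restrict_image f (Set.diff_subset.trans hA), restrict_image f hB] at this
  have hb0 : b = 0 := by
    have := hdisj.le_bot ⟨hbb, hb2⟩
    simpa using this
  rw [← hab, hb0, add_zero]; exact haa

lemma coord_vanish (f : I → X) {S D : Set I} (hS : LinearIndependent K (S.restrict f))
    (hfin : D.Finite) (hD : D ⊆ S) {v : X}
    (hv : v ∈ span K (f '' S)) (h : ∀ y ∈ D, v ∈ span K (f '' (S \ {y}))) :
    v ∈ span K (f '' (S \ D)) := by
  classical
  revert hD h
  refine Set.Finite.induction_on D hfin (motive := fun D _ => D ⊆ S →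
    (∀ y ∈ D, v ∈ span K (f '' (S \ {y}))) → v ∈ span K (f '' (S \ D)))
    (fun _ _ => by simpa using hv) ?_
  intro a D haD hDfin ih hD h
  · have h1 : v ∈ span K (f '' (S \ D)) :=
      ih ((Set.subset_insert a D).trans hD) (fun y hy => h y (Set.mem_insert_of_mem a hy))
    have h2 : v ∈ span K (f '' (S \ {a})) := h a (Set.mem_insert a D)
    have h3 := span_inter f hS Set.diff_subset Set.diff_subset h1 h2
    have : (S \ D) ∩ (S \ {a}) = S \ insert a D := by
      ext z; simp only [Set.mem_inter_iff, Set.mem_diff, Set.mem_singleton_iff,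
        Set.mem_insert_iff]; tauto
    rwa [this] at h3


set_option maxHeartbeats 1000000 in
lemma multi_exchange (f : I → X) (s : Finset ℕ) (Y W : ℕ → I) :
    ∀ B : Set I, LinearIndependent K (B.restrict f) →
    (∀ i ∈ s, Y i ∈ B) →
    (∀ i ∈ s, ∀ i' ∈ s, Y i = Y i' → i = i') →
    (∀ i ∈ s, W i ∉ B) →
    (∀ i ∈ s, ∀ i' ∈ s, W i = W i' → i = i') →
    (∀ i ∈ s, f (W i) ∉ span K (f '' (B \ {Y i}))) →
    (∀ i ∈ s, ∀ i' ∈ s, i < i' → f (W i) ∈ span K (f '' (B \ {Y i'}))) →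
    LinearIndependent K (((B \ Y '' ↑s) ∪ W '' ↑s).restrict f) := by
  classical
  induction s using Finset.induction_on_max with
  | empty =>
    intro B hB _ _ _ _ _ _
    have h : (B \ Y '' ↑(∅ : Finset ℕ) ∪ W '' ↑(∅ : Finset ℕ)) = B := by simp
    rw [h]
    exact hB
  | insert a s hmax ih =>
    intro B hB hY hYinj hW hWinj ha hb
    have hanotin : a ∉ s := fun h => lt_irrefl a (hmax a h)
    have hamem : a ∈ insert a s := Finset.mem_insert_self a s
    have hWaY : ∀ i ∈ s, W a ≠ Y i := by
      intro i hi h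
      exact hW a hamem (h ▸ hY i (Finset.mem_insert_of_mem hi))
    have hWaYa : W a ≠ Y a := fun h => hW a hamem (h ▸ hY a hamem)
    -- the new base set
    set B' : Set I := insert (W a) (B \ {Y a}) with hB'def
    have hWaB : W a ∉ B \ {Y a} := fun h => hW a hamem h.1
    have hB'li : LinearIndependent K (B'.restrict f) :=
      li_insert f hWaB (li_mono f Set.diff_subset hB) (ha a hamem)
    have key := ih B' hB'li ?_ ?_ ?_ ?_ ?_ ?_
    · -- set equality
      have hseteq : (B' \ Y '' ↑s) ∪ W '' ↑s
          = (B \ Y '' ↑(insert a s)) ∪ W '' ↑(insert a s) := by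
        have hWaY' : W a ∉ Y '' (↑s : Set ℕ) := by
          rintro ⟨i, hi, hh⟩
          exact hWaY i hi hh.symm
        rw [hB'def, Set.insert_diff_of_notMem _ hWaY', Set.insert_union,
          Finset.coe_insert, Set.image_insert_eq, Set.image_insert_eq, Set.union_insert,
          Set.diff_diff, Set.singleton_union]
      rwa [hseteq] at key
    · -- Y i ∈ B'
      intro i hi
      have hia : i ≠ a := fun h => hanotin (h ▸ hi)
      have : Y i ≠ Y a := fun h =>
        hia (hYinj i (Finset.mem_insert_of_mem hi) a hamem h)
      exact Set.mem_insert_of_mem _ ⟨hY i (Finset.mem_insert_of_mem hi), this⟩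
    · intro i hi i' hi' h
      exact hYinj i (Finset.mem_insert_of_mem hi) i' (Finset.mem_insert_of_mem hi') h
    · -- W i ∉ B'
      intro i hi
      have hia : i ≠ a := fun h => hanotin (h ▸ hi)
      intro hmem
      rcases hmem with (h | h)
      · exact hia (hWinj i (Finset.mem_insert_of_mem hi) a hamem h)
      · exact hW i (Finset.mem_insert_of_mem hi) h.1
    · intro i hi i' hi' h
      exact hWinj i (Finset.mem_insert_of_mem hi) i' (Finset.mem_insert_of_mem hi') h
    · -- key non-membership condition
      intro i hi
      have hi' : i ∈ insert a s := Finset.mem_insert_of_mem hi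
      have hia : i ≠ a := fun h => hanotin (h ▸ hi)
      have hYia : Y i ≠ Y a := fun h => hia (hYinj i hi' a hamem h)
      have hset : B' \ {Y i} = insert (W a) ((B \ {Y a}) \ {Y i}) := by
        rw [hB'def, Set.insert_diff_of_notMem]
        simp [hWaY i hi]
      intro hmem
      rw [hset, Set.image_insert_eq, Submodule.span_insert] at hmem
      obtain ⟨u1, hu1, u2, hu2, huv⟩ := Submodule.mem_sup.1 hmem
      obtain ⟨c, rfl⟩ := Submodule.mem_span_singleton.1 hu1
      by_cases hc : c = 0
      · apply ha i hi'
        have he : f (W i) = u2 := by rw [← huv, hc, zero_smul, zero_add]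
        rw [he]
        exact span_mono (Set.image_mono (f := f)
          (show ((B \ {Y a}) \ {Y i} : Set I) ⊆ B \ {Y i} from fun z hz => ⟨hz.1.1, hz.2⟩)) hu2
      · apply ha a hamem
        have hWi : f (W i) ∈ span K (f '' (B \ {Y a})) := hb i hi' a hamem (hmax i hi)
        have hu2' : u2 ∈ span K (f '' (B \ {Y a})) :=
          span_mono (Set.image_mono (f := f) (fun z hz => hz.1)) hu2
        have hce : c • f (W a) = f (W i) - u2 := by rw [← huv]; abel
        have hfa : f (W a) = c⁻¹ • (f (W i) - u2) := by
          rw [← hce, smul_smul, inv_mul_cancel₀ hc, one_smul]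
        rw [hfa]
        exact Submodule.smul_mem _ _ (Submodule.sub_mem _ hWi hu2')
    · -- triangular condition
      intro i hi i' hi' hii
      have h1 : f (W i) ∈ span K (f '' (B \ {Y i'})) :=
        hb i (Finset.mem_insert_of_mem hi) i' (Finset.mem_insert_of_mem hi') hii
      have h2 : f (W i) ∈ span K (f '' (B \ {Y a})) :=
        hb i (Finset.mem_insert_of_mem hi) a hamem (hmax i hi)
      have h3 := span_inter f hB Set.diff_subset Set.diff_subset h1 h2
      refine span_mono (Set.image_mono (f := f) ?_) h3
      rintro z ⟨⟨hzB, hz1⟩, ⟨_, hz2⟩⟩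
      exact ⟨Set.mem_insert_of_mem _ ⟨hzB, hz2⟩, hz1⟩


variable (K)

/-- Layers of reachable elements relative to a partition `C`. -/
def layer (f : I → X) {r : ℕ} (C : Fin (r+1) → Set I) : ℕ → Set I
  | 0 => ∅
  | (t+1) => layer f C t ∪ {x | ∃ j : Fin (r+1), j ≠ 0 ∧ (f x ∉ span K (f '' C j) ∨
      ∃ y, y ∈ C j ∩ layer f C t ∧ f x ∉ span K (f '' (C j \ {y})))}

lemma mem_layer_succ (f : I → X) {r : ℕ} {C : Fin (r+1) → Set I} {x : I} {t : ℕ} :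
    x ∈ layer K f C (t+1) ↔ x ∈ layer K f C t ∨ ∃ j : Fin (r+1), j ≠ 0 ∧
      (f x ∉ span K (f '' C j) ∨
        ∃ y, y ∈ C j ∩ layer K f C t ∧ f x ∉ span K (f '' (C j \ {y}))) := by
  rfl

lemma layer_zero (f : I → X) {r : ℕ} {C : Fin (r+1) → Set I} :
    layer K f C 0 = ∅ := rfl

lemma layer_mono (f : I → X) {r : ℕ} (C : Fin (r+1) → Set I) :
    Monotone (layer K f C) := by
  apply monotone_nat_of_le_succ
  intro t
  rw [show layer K f C (t+1) = layer K f C t ∪ _ from rfl]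
  exact Set.subset_union_left

lemma chain_exists (f : I → X) {r : ℕ} (C : Fin (r+1) → Set I) :
    ∀ t x0, x0 ∈ layer K f C (t+1) → x0 ∉ layer K f C t →
    ∃ (c : ℕ → I) (T : ℕ → Fin (r+1)),
      c 0 = x0 ∧
      (∀ i, i ≤ t → (c i ∈ layer K f C (t+1-i) ∧ c i ∉ layer K f C (t-i))) ∧
      (∀ i, 1 ≤ i → i ≤ t → (T i ≠ 0 ∧ c i ∈ C (T i) ∧
        f (c (i-1)) ∉ span K (f '' (C (T i) \ {c i})))) ∧
      (T (t+1) ≠ 0 ∧ f (c t) ∉ span K (f '' (C (T (t+1))))) := by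
  intro t
  induction t with
  | zero =>
    intro x0 h1 h0
    rw [mem_layer_succ] at h1
    rcases h1 with h | ⟨j, hj0, hbase | ⟨y, hy, _⟩⟩
    · exact absurd h h0
    · refine ⟨fun _ => x0, fun _ => j, rfl, ?_, ?_, hj0, hbase⟩
      · intro i hi
        interval_cases i
        refine ⟨?_, h0⟩
        rw [mem_layer_succ]
        exact Or.inr ⟨j, hj0, Or.inl hbase⟩
      · intro i hi1 hi0; omega
    · rw [layer_zero] at hy
      exact absurd hy.2 (Set.notMem_empty y)
  | succ t ih =>
    intro x0 h1 h0
    rw [mem_layer_succ] at h1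
    rcases h1 with h | ⟨j, hj0, hbase | ⟨y, ⟨hyC, hyL⟩, hspan⟩⟩
    · exact absurd h h0
    · exfalso
      apply h0
      rw [mem_layer_succ]
      exact Or.inr ⟨j, hj0, Or.inl hbase⟩
    · have hyL' : y ∉ layer K f C t := by
        intro hyt
        apply h0
        rw [mem_layer_succ]
        exact Or.inr ⟨j, hj0, Or.inr ⟨y, ⟨hyC, hyt⟩, hspan⟩⟩
      obtain ⟨c', T', hc'0, hlay, hpairs, hbase'⟩ := ih y hyL hyL'
      refine ⟨fun n => match n with | 0 => x0 | (k+1) => c' k,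
              fun n => match n with | 0 => T' 0 | 1 => j | (k+2) => T' (k+1),
              rfl, ?_, ?_, ?_⟩
      · intro i hi
        match i, hi with
        | 0, _ =>
          refine ⟨?_, ?_⟩
          · show x0 ∈ layer K f C (t+1+1-0)
            rw [show t+1+1-0 = t+1+1 from rfl, mem_layer_succ]
            exact Or.inr ⟨j, hj0, Or.inr ⟨y, ⟨hyC, hyL⟩, hspan⟩⟩
          · show x0 ∉ layer K f C (t+1-0)
            rw [show t+1-0 = t+1 from rfl]
            exact h0
        | (k+1), hk =>
          have hk' : k ≤ t := by omega
          have e1 : t + 1 + 1 - (k+1) = t + 1 - k := by omega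
          have e2 : t + 1 - (k+1) = t - k := by omega
          show c' k ∈ layer K f C (t+1+1-(k+1)) ∧ c' k ∉ layer K f C (t+1-(k+1))
          rw [e1, e2]
          exact hlay k hk'
      · intro i hi1 hi2
        match i, hi1, hi2 with
        | 1, _, _ =>
          refine ⟨hj0, ?_, ?_⟩
          · show c' 0 ∈ C j
            rw [hc'0]; exact hyC
          · show f x0 ∉ span K (f '' (C j \ {c' 0}))
            rw [hc'0]; exact hspan
        | (k+2), _, hk2 =>
          have h1k : 1 ≤ k+1 := by omega
          have h2k : k+1 ≤ t := by omega
          obtain ⟨ha, hb, hc⟩ := hpairs (k+1) h1k h2k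
          exact ⟨ha, hb, hc⟩
      · exact hbase'


/-- A good partition: covers everything, pairwise disjoint, each part independent. -/
def Good (f : I → X) {r : ℕ} (C : Fin (r+1) → Set I) : Prop :=
  (⋃ j, C j) = Set.univ ∧ Pairwise (Function.onFun Disjoint C) ∧
    ∀ j, LinearIndependent K ((C j).restrict f)

variable {K}

lemma Good.mem_unique {f : I → X} {r : ℕ} {C : Fin (r+1) → Set I} (h : Good K f C)
    {z : I} {j j' : Fin (r+1)} (h1 : z ∈ C j) (h2 : z ∈ C j') : j = j' := by
  by_contra hne
  exact Set.disjoint_left.1 (h.2.1 hne) h1 h2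

set_option maxHeartbeats 2000000 in
lemma exists_smaller [Fintype I] {f : I → X} {r : ℕ} {C : Fin (r+1) → Set I}
    (hC : Good K f C) {x0 : I} (hx0 : x0 ∈ C 0) {t0 : ℕ}
    (hmem : x0 ∈ layer K f C t0) :
    ∃ E : Fin (r+1) → Set I, Good K f E ∧ (E 0).ncard < (C 0).ncard := by
  classical
  have hex : ∃ t, x0 ∈ layer K f C (t+1) := by
    cases t0 with
    | zero => rw [layer_zero] at hmem; exact absurd hmem (Set.notMem_empty x0)
    | succ t => exact ⟨t, hmem⟩
  set t := Nat.find hex with htdef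
  have ht1 : x0 ∈ layer K f C (t+1) := Nat.find_spec hex
  have ht0 : x0 ∉ layer K f C t := by
    intro h
    cases ht : t with
    | zero => rw [ht, layer_zero] at h; exact Set.notMem_empty x0 h
    | succ s =>
      have : s < t := by omega
      exact Nat.find_min hex this (by rw [← ht]; exact h)
  obtain ⟨c, T, hc0, hlay, hpairs, hTlast0, hbase⟩ := chain_exists K f C t x0 ht1 ht0
  have hc0C : c 0 ∈ C 0 := by rw [hc0]; exact hx0
  -- injectivity
  have hne : ∀ i i', i ≤ t → i' ≤ t → i < i' → c i ≠ c i' := by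
    intro i i' hi hi' hlt heq
    have h1 := (hlay i hi).2
    have h2 := (hlay i' hi').1
    have h3 : c i' ∈ layer K f C (t - i) := layer_mono K f C (by omega) h2
    rw [← heq] at h3
    exact h1 h3
  have hinj : ∀ i i', i ≤ t → i' ≤ t → c i = c i' → i = i' := by
    intro i i' hi hi' heq
    by_contra hne'
    rcases lt_or_gt_of_ne hne' with h | h
    · exact hne i i' hi hi' h heq
    · exact hne i' i hi' hi h heq.symm
  have hhome : ∀ i, 1 ≤ i → i ≤ t → c i ∈ C (T i) := fun i h1 h2 => (hpairs i h1 h2).2.1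
  have hT0 : ∀ i, 1 ≤ i → i ≤ t → T i ≠ 0 := fun i h1 h2 => (hpairs i h1 h2).1
  -- the inserted element is not at home in its target set
  have hWnot : ∀ i, 1 ≤ i → i ≤ t + 1 → c (i-1) ∉ C (T i) := by
    intro i h1 h2 hcmem
    by_cases hit : i ≤ t
    · have hx : c (i-1) ≠ c i := hne (i-1) i (by omega) hit (by omega)
      exact (hpairs i h1 hit).2.2 (Submodule.subset_span ⟨c (i-1), ⟨hcmem, hx⟩, rfl⟩)
    · have hit' : i = t + 1 := by omega
      subst hit'
      have : (t+1) - 1 = t := by omega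
      rw [this] at hcmem
      exact hbase (Submodule.subset_span ⟨c t, hcmem, rfl⟩)
  -- low-layer coordinates vanish
  have hlow0 : ∀ i, i + 1 ≤ t → ∀ j : Fin (r+1), j ≠ 0 → f (c i) ∈ span K (f '' C j) := by
    intro i hi j hj
    by_contra hcon
    apply (hlay i (by omega)).2
    have he : t - i = (t - 1 - i) + 1 := by omega
    rw [he, mem_layer_succ]
    exact Or.inr ⟨j, hj, Or.inl hcon⟩
  have hlow : ∀ i, i + 1 ≤ t → ∀ j : Fin (r+1), j ≠ 0 →
      f (c i) ∈ span K (f '' (C j \ layer K f C (t - 1 - i))) := by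
    intro i hi j hj
    have he : t - i = (t - 1 - i) + 1 := by omega
    have hmem' : f (c i) ∈ span K (f '' C j) := hlow0 i hi j hj
    have hstep : ∀ y, y ∈ C j ∩ layer K f C (t - 1 - i) →
        f (c i) ∈ span K (f '' (C j \ {y})) := by
      intro y hy
      by_contra hcon
      apply (hlay i (by omega)).2
      rw [he, mem_layer_succ]
      exact Or.inr ⟨j, hj, Or.inr ⟨y, hy, hcon⟩⟩
    have := coord_vanish f (hC.2.2 j) (Set.toFinite _) Set.inter_subset_left hmem'
      (fun y hy => hstep y hy)
    rwa [Set.diff_self_inter] at this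
  -- definitions of the new partition
  set rc : Set I := {z | ∃ i, i ≤ t ∧ c i = z} with hrcdef
  set Ins : Fin (r+1) → Set I :=
    fun j => {z | ∃ i, 1 ≤ i ∧ i ≤ t+1 ∧ T i = j ∧ c (i-1) = z} with hInsdef
  set E : Fin (r+1) → Set I := fun j => (C j \ rc) ∪ Ins j with hEdef
  have hInssub : ∀ j, Ins j ⊆ rc := by
    rintro j z ⟨i, hi1, hi2, hiT, rfl⟩
    exact ⟨i-1, by omega, rfl⟩
  have hIns0 : Ins 0 = ∅ := by
    ext z
    simp only [hInsdef, Set.mem_setOf_eq, Set.mem_empty_iff_false, iff_false]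
    rintro ⟨i, hi1, hi2, hiT, rfl⟩
    by_cases hit : i ≤ t
    · exact hT0 i hi1 hit hiT
    · have : i = t+1 := by omega
      exact hTlast0 (this ▸ hiT)
  have hE0 : E 0 = C 0 \ {x0} := by
    rw [hEdef]
    show (C 0 \ rc) ∪ Ins 0 = C 0 \ {x0}
    rw [hIns0, Set.union_empty]
    ext z
    constructor
    · rintro ⟨hz, hrc⟩
      refine ⟨hz, fun h => hrc ⟨0, by omega, ?_⟩⟩
      rw [hc0]
      exact (Set.mem_singleton_iff.1 h).symm
    · rintro ⟨hz, hne0⟩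
      refine ⟨hz, ?_⟩
      rintro ⟨i, hi, rfl⟩
      rcases Nat.eq_zero_or_pos i with h0' | h0'
      · subst h0'
        exact hne0 (by rw [hc0]; exact rfl)
      · have hiT := hT0 i h0' hi
        have hmem := hhome i h0' hi
        exact hiT (hC.mem_unique hmem hz)
  -- independence of each part
  have hEind : ∀ j, LinearIndependent K ((E j).restrict f) := by
    intro j
    by_cases hj0 : j = 0
    · subst hj0
      rw [hE0]
      exact li_mono f Set.diff_subset (hC.2.2 0)
    · set s_j : Finset ℕ := (Finset.Icc 1 t).filter (fun i => T i = j) with hsjdef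
      have hsj_mem : ∀ i, i ∈ s_j ↔ (1 ≤ i ∧ i ≤ t ∧ T i = j) := by
        intro i
        simp [hsjdef, Finset.mem_filter, Finset.mem_Icc, and_assoc]
      have hME := multi_exchange f s_j c (fun i => c (i-1)) (C j) (hC.2.2 j)
        ?_ ?_ ?_ ?_ ?_ ?_
      rotate_left
      · intro i hi
        obtain ⟨h1, h2, h3⟩ := (hsj_mem i).1 hi
        rw [← h3]; exact hhome i h1 h2
      · intro i hi i' hi' heq
        obtain ⟨h1, h2, _⟩ := (hsj_mem i).1 hi
        obtain ⟨h1', h2', _⟩ := (hsj_mem i').1 hi'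
        exact hinj i i' h2 h2' heq
      · intro i hi
        obtain ⟨h1, h2, h3⟩ := (hsj_mem i).1 hi
        rw [← h3]; exact hWnot i h1 (by omega)
      · intro i hi i' hi' heq
        obtain ⟨h1, h2, _⟩ := (hsj_mem i).1 hi
        obtain ⟨h1', h2', _⟩ := (hsj_mem i').1 hi'
        have := hinj (i-1) (i'-1) (by omega) (by omega) heq
        omega
      · intro i hi
        obtain ⟨h1, h2, h3⟩ := (hsj_mem i).1 hi
        rw [← h3]; exact (hpairs i h1 h2).2.2
      · intro i hi i' hi' hlt
        obtain ⟨h1, h2, h3⟩ := (hsj_mem i).1 hi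
        obtain ⟨h1', h2', h3'⟩ := (hsj_mem i').1 hi'
        have hlow' := hlow (i-1) (by omega) j hj0
        refine span_mono (Set.image_mono (f := f) ?_) hlow'
        intro z hz
        refine ⟨hz.1, ?_⟩
        intro hzz
        rw [Set.mem_singleton_iff] at hzz
        subst hzz
        apply hz.2
        have : c i' ∈ layer K f C (t + 1 - i') := (hlay i' h2').1
        exact layer_mono K f C (by omega) this
      -- now we have hME; identify the sets
      have hCjrc : C j \ rc = C j \ (c '' ↑s_j) := by
        ext z
        constructor
        · rintro ⟨hz, hrc⟩
          refine ⟨hz, ?_⟩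
          rintro ⟨i, hi, rfl⟩
          obtain ⟨h1, h2, _⟩ := (hsj_mem i).1 hi
          exact hrc ⟨i, h2, rfl⟩
        · rintro ⟨hz, him⟩
          refine ⟨hz, ?_⟩
          rintro ⟨i, hi, rfl⟩
          rcases Nat.eq_zero_or_pos i with h0' | h0'
          · subst h0'
            exact hj0 (hC.mem_unique hz hc0C)
          · have hiT := hC.mem_unique (hhome i h0' hi) hz
            apply him
            refine ⟨i, (hsj_mem i).2 ⟨h0', hi, hiT⟩, rfl⟩
      by_cases hlast : T (t+1) = j
      · have hInsj : Ins j = insert (c t) ((fun i => c (i-1)) '' ↑s_j) := by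
          ext z
          simp only [hInsdef, Set.mem_setOf_eq, Set.mem_insert_iff, Set.mem_image,
            Finset.mem_coe]
          constructor
          · rintro ⟨i, hi1, hi2, hiT, rfl⟩
            by_cases hit : i ≤ t
            · exact Or.inr ⟨i, (hsj_mem i).2 ⟨hi1, hit, hiT⟩, rfl⟩
            · have : i = t+1 := by omega
              subst this
              left
              rfl
          · rintro (rfl | ⟨i, hi, rfl⟩)
            · exact ⟨t+1, by omega, by omega, hlast, by rw [show t+1-1 = t from by omega]⟩
            · obtain ⟨h1, h2, h3⟩ := (hsj_mem i).1 hi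
              exact ⟨i, h1, by omega, h3, rfl⟩
        have hEj : E j = insert (c t)
            ((C j \ (c '' ↑s_j)) ∪ ((fun i => c (i-1)) '' ↑s_j)) := by
          rw [hEdef]
          show (C j \ rc) ∪ Ins j = _
          rw [hCjrc, hInsj, Set.union_insert]
        rw [hEj]
        have hct_notin : c t ∉ (C j \ (c '' ↑s_j)) ∪ ((fun i => c (i-1)) '' ↑s_j) := by
          rintro (⟨hct, _⟩ | ⟨i, hi, heq⟩)
          · exact hWnot (t+1) (by omega) (by omega)
              (by rw [show t+1-1 = t from by omega, hlast]; exact hct)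
          · obtain ⟨h1, h2, _⟩ := (hsj_mem i).1 hi
            have := hinj (i-1) t (by omega) (by omega) heq
            omega
        have hct_span : f (c t) ∉ span K
            (f '' ((C j \ (c '' ↑s_j)) ∪ ((fun i => c (i-1)) '' ↑s_j))) := by
          intro hmem'
          apply hbase
          rw [hlast]
          refine Submodule.span_le.2 ?_ hmem'
          rintro v ⟨z, hz, rfl⟩
          rcases hz with ⟨hz1, _⟩ | ⟨i, hi, rfl⟩
          · exact Submodule.subset_span ⟨z, hz1, rfl⟩
          · obtain ⟨h1, h2, _⟩ := (hsj_mem i).1 hi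
            exact hlow0 (i-1) (by omega) j hj0
        exact li_insert f hct_notin hME hct_span
      · have hInsj : Ins j = (fun i => c (i-1)) '' ↑s_j := by
          ext z
          simp only [hInsdef, Set.mem_setOf_eq, Set.mem_image, Finset.mem_coe]
          constructor
          · rintro ⟨i, hi1, hi2, hiT, rfl⟩
            by_cases hit : i ≤ t
            · exact ⟨i, (hsj_mem i).2 ⟨hi1, hit, hiT⟩, rfl⟩
            · have : i = t+1 := by omega
              subst this
              exact absurd hiT hlast
          · rintro ⟨i, hi, rfl⟩
            obtain ⟨h1, h2, h3⟩ := (hsj_mem i).1 hi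
            exact ⟨i, h1, by omega, h3, rfl⟩
        have hEj : E j = (C j \ (c '' ↑s_j)) ∪ ((fun i => c (i-1)) '' ↑s_j) := by
          rw [hEdef]
          show (C j \ rc) ∪ Ins j = _
          rw [hCjrc, hInsj]
        rw [hEj]
        exact hME
  -- union
  have hEunion : (⋃ j, E j) = Set.univ := by
    ext z
    simp only [Set.mem_iUnion, Set.mem_univ, iff_true]
    by_cases hz : z ∈ rc
    · obtain ⟨i, hi, rfl⟩ := hz
      refine ⟨T (i+1), Or.inr ?_⟩
      exact ⟨i+1, by omega, by omega, rfl, by rw [show i+1-1 = i from by omega]⟩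
    · have : z ∈ ⋃ j, C j := by rw [hC.1]; exact Set.mem_univ z
      obtain ⟨j, hj⟩ := Set.mem_iUnion.1 this
      exact ⟨j, Or.inl ⟨hj, hz⟩⟩
  -- disjointness
  have hEdisj : Pairwise (Function.onFun Disjoint E) := by
    intro j j' hjj'
    rw [Function.onFun]
    rw [Set.disjoint_left]
    rintro z (⟨hz1, hz2⟩ | hz1) (⟨hz1', hz2'⟩ | hz1')
    · exact hjj' (hC.mem_unique hz1 hz1')
    · exact hz2 (hInssub j' hz1')
    · exact hz2' (hInssub j hz1)
    · obtain ⟨i, hi1, hi2, hiT, rfl⟩ := hz1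
      obtain ⟨i', hi1', hi2', hiT', heq⟩ := hz1'
      have := hinj (i'-1) (i-1) (by omega) (by omega) heq
      apply hjj'
      rw [← hiT, ← hiT']
      congr 1
      omega
  refine ⟨E, ⟨hEunion, hEdisj, hEind⟩, ?_⟩
  rw [hE0]
  exact Set.ncard_diff_singleton_lt_of_mem hx0 (Set.toFinite _)

end Part18


open Part18 Module in
set_option maxHeartbeats 2000000 in


/-- If a finite family of vectors in a finite-dimensional vector space can
be partitioned into `r + 1` linearly independent sets, and can also be partitioned into
one set and `r` linearly independent spanning sets, then it can be partitioned into one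
linearly independent set and `r` bases. -/
theorem partition_independent_and_bases
    {K X : Type*} [Field K] [AddCommGroup X] [Module K X] [FiniteDimensional K X]
    {I : Type*} [Fintype I] (f : I → X) (r : ℕ)
    (h1 : ∃ A : Fin (r + 1) → Set I,
        (⋃ j, A j) = Set.univ ∧ Pairwise (Function.onFun Disjoint A) ∧
        ∀ j, LinearIndependent K ((A j).restrict f))
    (h2 : ∃ B : Fin (r + 1) → Set I,
        (⋃ j, B j) = Set.univ ∧ Pairwise (Function.onFun Disjoint B) ∧
        ∀ j : Fin (r + 1), j ≠ 0 →
          LinearIndependent K ((B j).restrict f) ∧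
          Submodule.span K (f '' B j) = ⊤) :
    ∃ C : Fin (r + 1) → Set I,
      (⋃ j, C j) = Set.univ ∧ Pairwise (Function.onFun Disjoint C) ∧
      LinearIndependent K ((C 0).restrict f) ∧
      ∀ j : Fin (r + 1), j ≠ 0 →
        LinearIndependent K ((C j).restrict f) ∧
        Submodule.span K (f '' C j) = ⊤ := by
  classical
  obtain ⟨A, hAu, hAd, hAi⟩ := h1
  rcases Nat.eq_zero_or_pos r with rfl | hr
  · exact ⟨A, hAu, hAd, hAi 0, fun j hj => absurd (Fin.fin_one_eq_zero j) hj⟩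
  obtain ⟨B, hBu, hBd, hBs⟩ := h2
  -- pick a good partition with minimal cardinality of the zeroth part
  have hexgood : ∃ n, ∃ C : Fin (r+1) → Set I, Good K f C ∧ (C 0).ncard = n :=
    ⟨_, A, ⟨hAu, hAd, hAi⟩, rfl⟩
  obtain ⟨C, hCg, hCn⟩ := Nat.find_spec hexgood
  have hmin : ∀ C' : Fin (r+1) → Set I, Good K f C' → (C 0).ncard ≤ (C' 0).ncard := by
    intro C' hC'
    rw [hCn]
    exact Nat.find_min' hexgood ⟨C', hC', rfl⟩
  have hspan : ∀ k : Fin (r+1), k ≠ 0 → Submodule.span K (f '' C k) = ⊤ := by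
    intro k hk
    by_contra hne
    -- reachable elements
    set R : Set I := {x | ∃ t, x ∈ layer K f C t} with hRdef
    have hR0 : ∀ x ∈ R, x ∉ C 0 := by
      rintro x ⟨t, hxt⟩ hx0
      obtain ⟨E, hEg, hElt⟩ := exists_smaller hCg hx0 hxt
      exact absurd (hmin E hEg) (by omega)
    have hstuck : ∀ x, x ∉ R → ∀ j : Fin (r+1), j ≠ 0 →
        f x ∈ Submodule.span K (f '' (C j \ R)) := by
      intro x hx j hj
      have hx1 : f x ∈ Submodule.span K (f '' C j) := by
        by_contra hcon
        exact hx ⟨1, by rw [mem_layer_succ]; exact Or.inr ⟨j, hj, Or.inl hcon⟩⟩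
      have hx2 : ∀ y ∈ C j ∩ R, f x ∈ Submodule.span K (f '' (C j \ {y})) := by
        rintro y ⟨hyC, ty, hyt⟩
        by_contra hcon
        exact hx ⟨ty+1, by
          rw [mem_layer_succ]
          exact Or.inr ⟨j, hj, Or.inr ⟨y, ⟨hyC, hyt⟩, hcon⟩⟩⟩
      have := coord_vanish f (hCg.2.2 j) (Set.toFinite _) Set.inter_subset_left hx1 hx2
      rwa [Set.diff_self_inter] at this
    set W : Submodule K X := Submodule.span K (f '' (C k \ R)) with hWdef
    have hWj : ∀ j : Fin (r+1), j ≠ 0 → Submodule.span K (f '' (C j \ R)) = W := by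
      intro j hj
      apply le_antisymm
      · apply Submodule.span_le.2
        rintro v ⟨z, ⟨hz1, hz2⟩, rfl⟩
        exact hstuck z hz2 k hk
      · apply Submodule.span_le.2
        rintro v ⟨z, ⟨hz1, hz2⟩, rfl⟩
        exact hstuck z hz2 j hj
    set n := finrank K X with hndef
    set d := finrank K W with hddef
    -- each stuck part of C j is a basis of W
    have hdj : ∀ j : Fin (r+1), j ≠ 0 → (C j \ R).ncard = d := by
      intro j hj
      have hli : LinearIndependent K ((C j \ R).restrict f) :=
        li_mono f Set.diff_subset (hCg.2.2 j)
      haveI : Fintype ↥(C j \ R) := (Set.toFinite _).fintype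
      have hfr := finrank_span_eq_card hli
      rw [show range ((C j \ R).restrict f) = f '' (C j \ R) from Set.range_domRestrict f _,
        hWj j hj] at hfr
      rw [Set.ncard_eq_toFinset_card', Set.toFinset_card, ← hfr, hddef]
    -- size of each part
    have hCj_card : ∀ j : Fin (r+1), (C j).ncard = finrank K (Submodule.span K (f '' C j)) := by
      intro j
      haveI : Fintype ↥(C j) := (Set.toFinite _).fintype
      have hfr := finrank_span_eq_card (hCg.2.2 j)
      rw [show range ((C j).restrict f) = f '' C j from Set.range_domRestrict f _] at hfr
      rw [Set.ncard_eq_toFinset_card', Set.toFinset_card, ← hfr]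
    have hCj_le : ∀ j : Fin (r+1), (C j).ncard ≤ n := by
      intro j
      rw [hCj_card j, hndef]
      exact Submodule.finrank_le _
    have hCk_lt : (C k).ncard < n := by
      rw [hCj_card k, hndef]
      have hle := Submodule.finrank_le (Submodule.span K (f '' C k))
      have hneq : finrank K (Submodule.span K (f '' C k)) ≠ finrank K X :=
        fun h => hne (Submodule.eq_top_of_finrank_eq h)
      omega
    have hsplitC : ∀ j : Fin (r+1), j ≠ 0 → (C j ∩ R).ncard + d = (C j).ncard := by
      intro j hj
      rw [← hdj j hj]
      exact Set.ncard_inter_add_ncard_diff_eq_ncard (C j) R (Set.toFinite _)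
    -- quotient bound using the spanning sets B j
    have hq : ∀ j : Fin (r+1), j ≠ 0 → n ≤ (B j ∩ R).ncard + d := by
      intro j hj
      have hsurj : Submodule.map W.mkQ (Submodule.span K (f '' B j)) = ⊤ := by
        rw [(hBs j hj).2, Submodule.map_top, Submodule.range_mkQ]
      rw [Submodule.map_span] at hsurj
      have himg : (W.mkQ '' (f '' B j)) ⊆ insert 0 ((fun z => W.mkQ (f z)) '' (B j ∩ R)) := by
        rintro v ⟨u, ⟨z, hz, rfl⟩, rfl⟩
        by_cases hzR : z ∈ R
        · exact Set.mem_insert_of_mem _ ⟨z, ⟨hz, hzR⟩, rfl⟩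
        · have hfz : f z ∈ W := hstuck z hzR k hk
          have : W.mkQ (f z) = 0 := by
            rw [Submodule.mkQ_apply, Submodule.Quotient.mk_eq_zero]
            exact hfz
          rw [this]
          exact Set.mem_insert _ _
      have htop : Submodule.span K ((fun z => W.mkQ (f z)) '' (B j ∩ R)) = ⊤ := by
        apply le_antisymm le_top
        calc (⊤ : Submodule K (X ⧸ W)) = Submodule.span K (W.mkQ '' (f '' B j)) := hsurj.symm
        _ ≤ Submodule.span K (insert 0 ((fun z => W.mkQ (f z)) '' (B j ∩ R))) :=
            Submodule.span_mono himg
        _ = Submodule.span K ((fun z => W.mkQ (f z)) '' (B j ∩ R)) :=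
            Submodule.span_insert_zero
      haveI : Fintype ↥((fun z => W.mkQ (f z)) '' (B j ∩ R)) := (Set.toFinite _).fintype
      have h1 : finrank K (X ⧸ W) ≤ ((fun z => W.mkQ (f z)) '' (B j ∩ R)).toFinset.card := by
        have hb := finrank_span_le_card (R := K) ((fun z => W.mkQ (f z)) '' (B j ∩ R))
        rw [htop] at hb
        rwa [finrank_top] at hb
      have h2 : ((fun z => W.mkQ (f z)) '' (B j ∩ R)).toFinset.card ≤ (B j ∩ R).ncard := by
        rw [← Set.ncard_eq_toFinset_card']
        exact Set.ncard_image_le (Set.toFinite _)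
      have h3 : finrank K (X ⧸ W) + d = n := by
        rw [hddef, hndef]
        exact W.finrank_quotient_add_finrank
      omega
    -- counting
    have hsum1 : ∑ j ∈ Finset.univ.erase (0 : Fin (r+1)), (B j ∩ R).ncard ≤ R.ncard := by
      have hdisj : ∀ j ∈ Finset.univ.erase (0 : Fin (r+1)),
          ∀ j' ∈ Finset.univ.erase (0 : Fin (r+1)), j ≠ j' →
          Disjoint (B j ∩ R).toFinset (B j' ∩ R).toFinset := by
        intro j _ j' _ hjj'
        rw [Set.disjoint_toFinset]
        exact Set.disjoint_of_subset Set.inter_subset_left Set.inter_subset_left (hBd hjj')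
      have hbi := Finset.card_biUnion hdisj
      have hsub : (Finset.univ.erase (0 : Fin (r+1))).biUnion (fun j => (B j ∩ R).toFinset)
          ⊆ R.toFinset := by
        intro z hz
        rw [Finset.mem_biUnion] at hz
        obtain ⟨j, _, hzj⟩ := hz
        rw [Set.mem_toFinset] at hzj ⊢
        exact hzj.2
      calc ∑ j ∈ Finset.univ.erase (0 : Fin (r+1)), (B j ∩ R).ncard
          = ∑ j ∈ Finset.univ.erase (0 : Fin (r+1)), (B j ∩ R).toFinset.card := by
            apply Finset.sum_congr rfl
            intro j _
            rw [Set.ncard_eq_toFinset_card']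
        _ = ((Finset.univ.erase (0 : Fin (r+1))).biUnion (fun j => (B j ∩ R).toFinset)).card :=
            hbi.symm
        _ ≤ R.toFinset.card := Finset.card_le_card hsub
        _ = R.ncard := (Set.ncard_eq_toFinset_card' R).symm
    have hsum2 : R.ncard ≤ ∑ j ∈ Finset.univ.erase (0 : Fin (r+1)), (C j ∩ R).ncard := by
      have hsub : R.toFinset ⊆ (Finset.univ.erase (0 : Fin (r+1))).biUnion
          (fun j => (C j ∩ R).toFinset) := by
        intro z hz
        rw [Set.mem_toFinset] at hz
        have hz0 : z ∉ C 0 := hR0 z hz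
        have : z ∈ ⋃ j, C j := by rw [hCg.1]; exact Set.mem_univ z
        obtain ⟨j, hj⟩ := Set.mem_iUnion.1 this
        have hj0 : j ≠ 0 := fun h => hz0 (h ▸ hj)
        rw [Finset.mem_biUnion]
        exact ⟨j, Finset.mem_erase.2 ⟨hj0, Finset.mem_univ j⟩,
          Set.mem_toFinset.2 ⟨hj, hz⟩⟩
      calc R.ncard = R.toFinset.card := Set.ncard_eq_toFinset_card' R
        _ ≤ ((Finset.univ.erase (0 : Fin (r+1))).biUnion (fun j => (C j ∩ R).toFinset)).card :=
            Finset.card_le_card hsub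
        _ ≤ ∑ j ∈ Finset.univ.erase (0 : Fin (r+1)), (C j ∩ R).toFinset.card :=
            Finset.card_biUnion_le
        _ = ∑ j ∈ Finset.univ.erase (0 : Fin (r+1)), (C j ∩ R).ncard := by
            apply Finset.sum_congr rfl
            intro j _
            rw [Set.ncard_eq_toFinset_card']
    have hstrict : ∑ j ∈ Finset.univ.erase (0 : Fin (r+1)), (C j ∩ R).ncard <
        ∑ j ∈ Finset.univ.erase (0 : Fin (r+1)), (B j ∩ R).ncard := by
      apply Finset.sum_lt_sum
      · intro j hj
        have hj0 : j ≠ 0 := (Finset.mem_erase.1 hj).1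
        have e1 := hsplitC j hj0
        have e2 := hCj_le j
        have e3 := hq j hj0
        omega
      · refine ⟨k, Finset.mem_erase.2 ⟨hk, Finset.mem_univ k⟩, ?_⟩
        have e1 := hsplitC k hk
        have e2 := hCk_lt
        have e3 := hq k hk
        omega
    omega
  exact ⟨C, hCg.1, hCg.2.1, hCg.2.2 0, fun j hj => ⟨hCg.2.2 j, hspan j hj⟩⟩
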